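/- arXiv:1711.10763 — 2 statements merged into one kernel-verified Lean document; each statement's English description precedes it below -/
import Mathlib

section
/- The map F defined coordinatewise by f₀(x) = (x₀ + Σ_{i=1}^∞ 2^{−i}·(1/x_i)) mod 1 and f_i(x) = x_i + 1 for i ≥ 1 (with ∞ + 1 = ∞ and 1/∞ = 0) maps Y into Y and is continuous on Y. -/
open Filter

noncomputable section

instance : Fact ((0:ℝ) < 1) := ⟨one_pos⟩

/-- The unit circle `𝕊 = ℝ/ℤ` (with the metric `d₀(x,y) = min{|x−y|, 1−|x−y|}`). -/
abbrev Circle1 := AddCircle (1 : ℝ)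

/-- Points of the product space `Π_{i=0}^∞ X_i = 𝕊 × Π_{i≥1} (ℕ ∪ {∞})`:
the first component is the circle coordinate `x₀`, and the second component gives
the coordinates `x_i ∈ ℕ ∪ {∞}` for `i ≥ 1`. -/
abbrev Pt := Circle1 × (ℕ+ → ℕ∞)

/-- `1/x` for `x ∈ ℕ ∪ {∞}`, with the convention `1/∞ = 0`. -/
noncomputable def einv (x : ℕ∞) : ℝ := ((x.toNat : ℕ) : ℝ)⁻¹

/-- The metric `d_i(x,y) = |1/x − 1/y|` on `ℕ ∪ {∞}` (for `i ≥ 1`). -/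
noncomputable def dE (x y : ℕ∞) : ℝ := |einv x - einv y|

/-- The metric `D(x,y) = Σ_{i=0}^∞ d_i(x_i,y_i)/2^i` on the product space. -/
noncomputable def D (x y : Pt) : ℝ :=
  dist x.1 y.1 + ∑' i : ℕ+, dE (x.2 i) (y.2 i) / 2 ^ (i : ℕ)

/-- `Y`: the set of points whose sequence of coordinates `(x_i)_{i≥1}` is a nondecreasing
sequence in `ℕ ∪ {∞}` (with `ℕ = {1,2,…}`). -/
def Y : Set Pt := {x | (∀ i, 1 ≤ x.2 i) ∧ Monotone x.2}

/-- The skew-product map `F`: `f₀(x) = (x₀ + Σ_{i≥1} 2^{−i}·(1/x_i)) mod 1` and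
`f_i(x) = x_i + 1` for `i ≥ 1`, with `∞ + 1 = ∞`. -/
noncomputable def F (x : Pt) : Pt :=
  (x.1 + (((∑' i : ℕ+, (1 / 2 ^ (i : ℕ)) * einv (x.2 i)) : ℝ) : Circle1),
   fun i => x.2 i + 1)

/-- `(x, y)` is a scrambled pair of `F`:
`liminf_{n→∞} D(Fⁿ(x), Fⁿ(y)) = 0` and `limsup_{n→∞} D(Fⁿ(x), Fⁿ(y)) > 0`. -/
def ScrambledPair (x y : Pt) : Prop :=
  liminf (fun n : ℕ => D (F^[n] x) (F^[n] y)) atTop = 0 ∧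
  0 < limsup (fun n : ℕ => D (F^[n] x) (F^[n] y)) atTop


lemma einv_nonneg' (x : ℕ∞) : 0 ≤ einv x := by unfold einv; positivity

lemma einv_le_one' (x : ℕ∞) : einv x ≤ 1 := by
  unfold einv
  rcases Nat.eq_zero_or_pos x.toNat with h | h
  · simp [h]
  · rw [inv_le_one_iff₀]; right; exact_mod_cast h

lemma continuous_einv : Continuous einv := by
  rw [continuous_iff_continuousAt]
  intro x
  rcases eq_or_ne x ⊤ with rfl | hx
  · rw [ContinuousAt]
    have h0 : einv ⊤ = 0 := by simp [einv]
    rw [h0, NormedAddCommGroup.tendsto_nhds_zero]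
    intro ε hε
    obtain ⟨N, hN⟩ := exists_nat_one_div_lt hε
    filter_upwards [lt_mem_nhds (WithTop.coe_lt_top N)] with y hy
    rcases eq_or_ne y ⊤ with rfl | hy'
    · simpa [einv] using hε
    · lift y to ℕ using hy'
      have hNy : N < y := Nat.cast_lt.mp hy
      have he : einv (y:ℕ∞) = (y:ℝ)⁻¹ := by simp [einv]
      rw [Real.norm_eq_abs, he, abs_of_nonneg (by positivity)]
      calc (y:ℝ)⁻¹ ≤ 1/(N+1) := by
            rw [one_div]
            apply inv_anti₀ (by positivity)
            exact_mod_cast hNy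
        _ < ε := hN
  · rw [ContinuousAt, ENat.nhds_eq_pure hx]
    exact tendsto_pure_nhds _ _

lemma continuous_S : Continuous fun x : Pt => ∑' i : ℕ+, (1 / 2 ^ (i : ℕ)) * einv (x.2 i) := by
  apply continuous_tsum (u := fun i : ℕ+ => (1 / 2 ^ (i : ℕ) : ℝ))
  · exact fun i => continuous_const.mul (continuous_einv.comp ((continuous_apply i).comp continuous_snd))
  · exact (summable_geometric_two.comp_injective PNat.coe_injective).congr (by simp)
  · intro n x
    rw [Real.norm_eq_abs, abs_mul, abs_of_nonneg (by positivity), abs_of_nonneg (einv_nonneg' _)]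
    have h1 : (0:ℝ) < 1 / 2 ^ (n:ℕ) := by positivity
    calc 1 / 2 ^ (n:ℕ) * einv (x.2 n) ≤ 1 / 2 ^ (n:ℕ) * 1 :=
          mul_le_mul_of_nonneg_left (einv_le_one' _) h1.le
      _ = 1 / 2 ^ (n:ℕ) := mul_one _

/-- The map `F` maps `Y` into `Y` and is continuous on `Y`. -/
theorem F_mapsTo_continuousOn : Set.MapsTo F Y Y ∧ ContinuousOn F Y := by
  constructor
  · intro x hx
    refine ⟨fun i => le_trans (hx.1 i) le_self_add, fun i j hij => add_le_add_left (hx.2 hij) 1⟩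
  · apply Continuous.continuousOn
    apply Continuous.prodMk
    · exact continuous_fst.add ((AddCircle.continuous_mk' 1).comp continuous_S)
    · exact continuous_pi fun i => ((continuous_apply i).comp continuous_snd).add continuous_const
end
end

section
/- Let S ⊆ Y be a scrambled set of (Y, F). If x ≠ y are two points of S each having at least one coordinate equal to ∞, then l_x ≠ l_y, where l_x = min{i ≥ 1 : x_i = ∞}. Equivalently, the map ι(x) = l_x is injective on the set of points of S having an infinite coordinate. -/
open Filter
open Topology

noncomputable section

-- Auxiliary lemmas

lemma einv_top : einv ⊤ = 0 := by simp [einv]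

lemma einv_add_coe (m k : ℕ) : einv ((m:ℕ∞) + k) = ((m + k : ℕ) : ℝ)⁻¹ := by
  rw [einv, ← Nat.cast_add, ENat.toNat_coe]

lemma F_iter_snd (x : Pt) (n : ℕ) (i : ℕ+) : (F^[n] x).2 i = x.2 i + n := by
  induction n with
  | zero => simp
  | succ n ih =>
    rw [Function.iterate_succ_apply']
    show (F^[n] x).2 i + 1 = _
    rw [ih, Nat.cast_succ, add_assoc]

noncomputable def cc (k : ℕ) (z : Pt) : ℝ := ∑' i : ℕ+, (1 / 2 ^ (i:ℕ)) * einv (z.2 i + k)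

lemma F_iter_fst (x : Pt) (n : ℕ) :
    (F^[n] x).1 = x.1 + ((∑ k ∈ Finset.range n, cc k x : ℝ) : Circle1) := by
  induction n with
  | zero => simp
  | succ n ih =>
    rw [Function.iterate_succ_apply']
    show (F^[n] x).1 + ((∑' i : ℕ+, (1 / 2 ^ (i:ℕ)) * einv ((F^[n] x).2 i) : ℝ) : Circle1) = _
    have h1 : (∑' i : ℕ+, (1 / 2 ^ (i:ℕ)) * einv ((F^[n] x).2 i) : ℝ) = cc n x := by
      unfold cc; congr 1; ext i; rw [F_iter_snd]
    rw [h1, ih, Finset.sum_range_succ, QuotientAddGroup.mk_add, add_assoc]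

lemma tendsto_inv_add (a : ℕ) : Tendsto (fun n : ℕ => ((a + n : ℕ):ℝ)⁻¹) atTop (𝓝 0) := by
  have h : Tendsto (fun n:ℕ => ((a:ℝ) + n)) atTop atTop :=
    tendsto_atTop_add_const_left _ _ tendsto_natCast_atTop_atTop
  have := tendsto_inv_atTop_zero.comp h
  simpa [Function.comp_def] using this

lemma summable_einv_diff (a b : ℕ) (ha : 1 ≤ a) (hb : 1 ≤ b) :
    Summable (fun k : ℕ => ((a + k:ℕ):ℝ)⁻¹ - ((b + k:ℕ):ℝ)⁻¹) := by
  have hmaj : Summable (fun k : ℕ => |(b:ℝ) - a| * (((k:ℝ)+1)*((k:ℝ)+1))⁻¹) := by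
    apply Summable.mul_left
    have h2 : Summable (fun n : ℕ => 1 / ((n:ℝ)) ^ 2) :=
      (Real.summable_one_div_nat_pow (p := 2)).mpr one_lt_two
    have h3 := (summable_nat_add_iff 1).mpr h2
    apply h3.congr
    intro k
    push_cast
    rw [one_div, sq]
  apply Summable.of_abs
  apply Summable.of_nonneg_of_le (fun k => abs_nonneg _) (fun k => ?_) hmaj
  have hak : (0:ℝ) < (a:ℝ) + k := by positivity
  have hbk : (0:ℝ) < (b:ℝ) + k := by positivity
  have heq : ((a + k:ℕ):ℝ)⁻¹ - ((b + k:ℕ):ℝ)⁻¹ = ((b:ℝ) - a)/(((a:ℝ)+k)*((b:ℝ)+k)) := by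
    push_cast
    field_simp
    ring
  rw [heq, abs_div, abs_of_pos (mul_pos hak hbk), div_eq_mul_inv]
  have ha1 : (1:ℝ) ≤ (a:ℝ) := by exact_mod_cast ha
  have hb1 : (1:ℝ) ≤ (b:ℝ) := by exact_mod_cast hb
  apply mul_le_mul_of_nonneg_left _ (abs_nonneg _)
  apply inv_anti₀ (by positivity)
  apply mul_le_mul (by linarith) (by linarith) (by positivity) (le_of_lt hak)


/-- Let `S ⊆ Y` be a scrambled set of `(Y, F)`. If `x ≠ y` are two points of `S` each having
at least one coordinate equal to `∞`, then `l_x ≠ l_y`, where `l_x = min{i ≥ 1 : x_i = ∞}`;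
equivalently, `x ↦ l_x` is injective on the points of `S` having an infinite coordinate. -/
theorem first_infinite_index_injective_on_scrambled_set
    (S : Set Pt) (hS : S ⊆ Y)
    (hscr : ∀ x ∈ S, ∀ y ∈ S, x ≠ y → ScrambledPair x y)
    (x y : Pt) (hxS : x ∈ S) (hyS : y ∈ S) (hxy : x ≠ y)
    (lx ly : ℕ+)
    (hlx : x.2 lx = ⊤ ∧ ∀ i : ℕ+, i < lx → x.2 i ≠ ⊤)
    (hly : y.2 ly = ⊤ ∧ ∀ i : ℕ+, i < ly → y.2 i ≠ ⊤) :
    lx ≠ ly := by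
  intro hll
  subst hll
  obtain ⟨hxt, hxf⟩ := hlx
  obtain ⟨hyt, hyf⟩ := hly
  obtain ⟨hx1, hxm⟩ := hS hxS
  obtain ⟨hy1, hym⟩ := hS hyS
  set s : Finset ℕ+ := Finset.Iio lx with hs
  have hxtop : ∀ i : ℕ+, lx ≤ i → x.2 i = ⊤ := fun i hi => top_le_iff.mp (hxt ▸ hxm hi)
  have hytop : ∀ i : ℕ+, lx ≤ i → y.2 i = ⊤ := fun i hi => top_le_iff.mp (hyt ▸ hym hi)
  set a : ℕ+ → ℕ := fun i => (x.2 i).toNat with hadef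
  set b : ℕ+ → ℕ := fun i => (y.2 i).toNat with hbdef
  have hxa : ∀ i ∈ s, x.2 i = (a i : ℕ∞) := by
    intro i hi; rw [hs, Finset.mem_Iio] at hi
    exact (ENat.coe_toNat (hxf i hi)).symm
  have hyb : ∀ i ∈ s, y.2 i = (b i : ℕ∞) := by
    intro i hi; rw [hs, Finset.mem_Iio] at hi
    exact (ENat.coe_toNat (hyf i hi)).symm
  have ha1 : ∀ i ∈ s, 1 ≤ a i := by
    intro i hi
    have h := hx1 i
    rw [hxa i hi] at h
    exact_mod_cast h
  have hb1 : ∀ i ∈ s, 1 ≤ b i := by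
    intro i hi
    have h := hy1 i
    rw [hyb i hi] at h
    exact_mod_cast h
  have hcx : ∀ k : ℕ, cc k x = ∑ i ∈ s, (1 / 2 ^ (i:ℕ)) * einv (x.2 i + k) := by
    intro k
    apply tsum_eq_sum
    intro i hi
    have hle : lx ≤ i := le_of_not_gt (by simpa [hs] using hi)
    rw [hxtop i hle, top_add, einv_top, mul_zero]
  have hcy : ∀ k : ℕ, cc k y = ∑ i ∈ s, (1 / 2 ^ (i:ℕ)) * einv (y.2 i + k) := by
    intro k
    apply tsum_eq_sum
    intro i hi
    have hle : lx ≤ i := le_of_not_gt (by simpa [hs] using hi)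
    rw [hytop i hle, top_add, einv_top, mul_zero]
  set d : ℕ → ℝ := fun k => cc k x - cc k y with hd
  have hdsum : Summable d := by
    have hrep : ∀ k, d k
        = ∑ i ∈ s, (1/2^(i:ℕ)) * (((a i + k:ℕ):ℝ)⁻¹ - ((b i + k:ℕ):ℝ)⁻¹) := by
      intro k
      rw [hd]
      simp only
      rw [hcx k, hcy k, ← Finset.sum_sub_distrib]
      apply Finset.sum_congr rfl
      intro i hi
      rw [hxa i hi, hyb i hi, einv_add_coe, einv_add_coe]
      ring
    apply (summable_congr hrep).mpr
    apply summable_sum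
    intro i hi
    exact (summable_einv_diff (a i) (b i) (ha1 i hi) (hb1 i hi)).mul_left _
  have hpart : Tendsto (fun n => ∑ k ∈ Finset.range n, d k) atTop (𝓝 (∑' k, d k)) :=
    hdsum.hasSum.tendsto_sum_nat
  have hdiff : ∀ n : ℕ, (F^[n] x).1 - (F^[n] y).1
      = (x.1 - y.1) + ((∑ k ∈ Finset.range n, d k : ℝ) : Circle1) := by
    intro n
    rw [F_iter_fst, F_iter_fst]
    have h2 : (∑ k ∈ Finset.range n, d k : ℝ)
        = (∑ k ∈ Finset.range n, cc k x) - (∑ k ∈ Finset.range n, cc k y) := by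
      rw [← Finset.sum_sub_distrib]
    rw [h2, QuotientAddGroup.mk_sub]
    abel
  have hL : Tendsto (fun n => (F^[n] x).1 - (F^[n] y).1) atTop
      (𝓝 ((x.1 - y.1) + (((∑' k, d k : ℝ)) : Circle1))) := by
    apply Tendsto.congr (fun n => (hdiff n).symm)
    exact tendsto_const_nhds.add ((continuous_quotient_mk'.tendsto _).comp hpart)
  have hA : Tendsto (fun n => dist (F^[n] x).1 (F^[n] y).1) atTop
      (𝓝 ‖(x.1 - y.1) + (((∑' k, d k : ℝ)) : Circle1)‖) := by
    simp only [dist_eq_norm]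
    exact hL.norm
  have hBrep : ∀ n : ℕ, (∑' i : ℕ+, dE ((F^[n] x).2 i) ((F^[n] y).2 i) / 2 ^ (i:ℕ))
      = ∑ i ∈ s, |((a i + n:ℕ):ℝ)⁻¹ - ((b i + n:ℕ):ℝ)⁻¹| / 2 ^ (i:ℕ) := by
    intro n
    have h0 : ∀ i ∉ s, dE ((F^[n] x).2 i) ((F^[n] y).2 i) / 2 ^ (i:ℕ) = 0 := by
      intro i hi
      have hle : lx ≤ i := le_of_not_gt (by simpa [hs] using hi)
      rw [F_iter_snd, F_iter_snd, hxtop i hle, hytop i hle, dE, sub_self, abs_zero, zero_div]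
    rw [tsum_eq_sum h0]
    apply Finset.sum_congr rfl
    intro i hi
    rw [F_iter_snd, F_iter_snd, hxa i hi, hyb i hi, dE, einv_add_coe, einv_add_coe]
  have hB : Tendsto (fun n : ℕ => ∑' i : ℕ+, dE ((F^[n] x).2 i) ((F^[n] y).2 i) / 2 ^ (i:ℕ))
      atTop (𝓝 0) := by
    apply Tendsto.congr (fun n => (hBrep n).symm)
    have h3 : Tendsto (fun n : ℕ => ∑ i ∈ s, |((a i + n:ℕ):ℝ)⁻¹ - ((b i + n:ℕ):ℝ)⁻¹| / 2 ^ (i:ℕ))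
        atTop (𝓝 (∑ i ∈ s, 0)) := by
      apply tendsto_finset_sum
      intro i _
      have h := ((tendsto_inv_add (a i)).sub (tendsto_inv_add (b i))).abs
      simpa using h.div_const (2 ^ (i:ℕ))
    simpa using h3
  have hD : Tendsto (fun n : ℕ => D (F^[n] x) (F^[n] y)) atTop
      (𝓝 (‖(x.1 - y.1) + (((∑' k, d k : ℝ)) : Circle1)‖ + 0)) := hA.add hB
  obtain ⟨hl0, hl1⟩ := hscr x hxS y hyS hxy
  rw [hD.liminf_eq] at hl0
  rw [hD.limsup_eq] at hl1
  rw [hl0] at hl1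
  exact lt_irrefl 0 hl1
end
end
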